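/- If a solution of the deterministic SIS competition system travels from a point a = (a_1, a_2) with a_1, a_2 > 0 to a point b = (b_1, b_2) with b_1, b_2 > 0, then the time taken equals t_{a→b} = (λ_2/(μ_2 λ_1 - μ_1 λ_2)) log(b_1/a_1) - (λ_1/(μ_2 λ_1 - μ_1 λ_2)) log(b_2/a_2), provided μ_2 λ_1 ≠ μ_1 λ_2. -/

import Mathlib

theorem aux_linear_ode (f : ℝ → ℝ) (hf : Continuous f) (x : ℝ → ℝ)
    (hx : ∀ t, HasDerivAt x (f t * x t) t) (T : ℝ) :
    x T = x 0 * Real.exp (∫ s in (0:ℝ)..T, f s) := by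
  set F : ℝ → ℝ := fun t => ∫ s in (0:ℝ)..t, f s with hFdef
  have hF : ∀ t, HasDerivAt F (f t) t := fun t =>
    intervalIntegral.integral_hasDerivAt_right (hf.intervalIntegrable 0 t)
      (hf.stronglyMeasurableAtFilter _ _) hf.continuousAt
  have hy : ∀ t, HasDerivAt (fun t => x t * Real.exp (-F t)) 0 t := by
    intro t
    have h1 : HasDerivAt (fun t => x t * Real.exp (-F t))
        (f t * x t * Real.exp (-F t) + x t * (Real.exp (-F t) * -f t)) t :=
      (hx t).mul (((hF t).neg).exp)
    convert h1 using 1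
    ring
  have hconst : (fun t => x t * Real.exp (-F t)) T
      = (fun t => x t * Real.exp (-F t)) 0 := by
    have : ∀ t, (fun t => x t * Real.exp (-F t)) t = (fun t => x t * Real.exp (-F t)) 0 :=
      fun t => is_const_of_deriv_eq_zero
        (fun s => (hy s).differentiableAt) (fun s => (hy s).deriv) t 0
    exact this T
  have hF0 : F 0 = 0 := by simp [hFdef]
  simp only [hF0, neg_zero, Real.exp_zero, mul_one] at hconst
  have := congrArg (fun z => z * Real.exp (F T)) hconst
  simpa [mul_assoc, ← Real.exp_add] using this

/-- Travel time between two points of a trajectory of the deterministic SIS competition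
system: if the solution goes from `a = (a₁,a₂)` (at time `0`) to `b = (b₁,b₂)` (at time `T ≥ 0`),
with all coordinates positive, then
`T = (λ₂/(μ₂λ₁ - μ₁λ₂)) log(b₁/a₁) - (λ₁/(μ₂λ₁ - μ₁λ₂)) log(b₂/a₂)`. -/
theorem sis_competition_travel_time
    (lam1 lam2 mu1 mu2 : ℝ) (hlam1 : 0 < lam1) (hlam2 : 0 < lam2)
    (hmu1 : 0 < mu1) (hmu2 : 0 < mu2) (hne : mu2 * lam1 ≠ mu1 * lam2)
    (x1 x2 : ℝ → ℝ)
    (hx1 : ∀ t : ℝ, HasDerivAt x1 (lam1 * x1 t * (1 - x1 t - x2 t) - mu1 * x1 t) t)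
    (hx2 : ∀ t : ℝ, HasDerivAt x2 (lam2 * x2 t * (1 - x1 t - x2 t) - mu2 * x2 t) t)
    (a1 a2 b1 b2 : ℝ) (ha1 : 0 < a1) (ha2 : 0 < a2) (hb1 : 0 < b1) (hb2 : 0 < b2)
    (T : ℝ) (hT : 0 ≤ T)
    (hx10 : x1 0 = a1) (hx20 : x2 0 = a2) (hx1T : x1 T = b1) (hx2T : x2 T = b2) :
    T = (lam2 / (mu2 * lam1 - mu1 * lam2)) * Real.log (b1 / a1)
        - (lam1 / (mu2 * lam1 - mu1 * lam2)) * Real.log (b2 / a2) := by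
  have hcx1 : Continuous x1 := continuous_iff_continuousAt.2 fun t => (hx1 t).continuousAt
  have hcx2 : Continuous x2 := continuous_iff_continuousAt.2 fun t => (hx2 t).continuousAt
  set f1 : ℝ → ℝ := fun t => lam1 * (1 - x1 t - x2 t) - mu1 with hf1def
  set f2 : ℝ → ℝ := fun t => lam2 * (1 - x1 t - x2 t) - mu2 with hf2def
  have hcf1 : Continuous f1 := by fun_prop
  have hcf2 : Continuous f2 := by fun_prop
  have h1 : x1 T = x1 0 * Real.exp (∫ s in (0:ℝ)..T, f1 s) := by
    refine aux_linear_ode f1 hcf1 x1 (fun t => ?_) T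
    convert hx1 t using 1; simp [hf1def]; ring
  have h2 : x2 T = x2 0 * Real.exp (∫ s in (0:ℝ)..T, f2 s) := by
    refine aux_linear_ode f2 hcf2 x2 (fun t => ?_) T
    convert hx2 t using 1; simp [hf2def]; ring
  rw [hx10, hx1T] at h1
  rw [hx20, hx2T] at h2
  have hc : mu2 * lam1 - mu1 * lam2 ≠ 0 := sub_ne_zero.2 hne
  have hlog1 : Real.log (b1 / a1) = ∫ s in (0:ℝ)..T, f1 s := by
    rw [h1, mul_comm, mul_div_assoc, div_self ha1.ne', mul_one, Real.log_exp]
  have hlog2 : Real.log (b2 / a2) = ∫ s in (0:ℝ)..T, f2 s := by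
    rw [h2, mul_comm, mul_div_assoc, div_self ha2.ne', mul_one, Real.log_exp]
  have key : lam2 * (∫ s in (0:ℝ)..T, f1 s) - lam1 * (∫ s in (0:ℝ)..T, f2 s)
      = (mu2 * lam1 - mu1 * lam2) * T := by
    rw [← intervalIntegral.integral_const_mul, ← intervalIntegral.integral_const_mul,
      ← intervalIntegral.integral_sub ((hcf1.intervalIntegrable _ _).const_mul _)
        ((hcf2.intervalIntegrable _ _).const_mul _)]
    have hpt : ∀ s : ℝ, lam2 * f1 s - lam1 * f2 s = mu2 * lam1 - mu1 * lam2 := by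
      intro s; simp only [hf1def, hf2def]; ring
    simp only [hpt, intervalIntegral.integral_const, smul_eq_mul, sub_zero]
    ring
  rw [hlog1, hlog2]
  field_simp
  rw [eq_div_iff (by intro h; apply hc; linarith)]
  linarith [key]
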